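/- Every almost square Banach space contains an isomorphic copy of c₀. -/

import Mathlib

open TopologicalSpace Metric

def IsASQ (Y : Type*) [NormedAddCommGroup Y] [NormedSpace ℝ Y] : Prop :=
  ∀ ε : ℝ, 0 < ε → ∀ N : ℕ, ∀ y : Fin N → Y, (∀ n, ‖y n‖ = 1) →
    ∃ z : Y, ‖z‖ = 1 ∧ ∀ n, ‖y n - z‖ ≤ 1 + ε

namespace ASQProof

variable {Y : Type*} [NormedAddCommGroup Y] [NormedSpace ℝ Y]

/-- convex combination estimate, nonnegative coefficient version -/
lemma combo_nonneg {w z : Y} (hw : ‖w‖ = 1) (hz : ‖z‖ = 1) {ε : ℝ} (hε : 0 ≤ ε)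
    (h2 : ‖w + z‖ ≤ 1 + ε) {s t : ℝ} (hs0 : 0 ≤ s) (hs1 : s ≤ 1) (ht0 : 0 ≤ t)
    (ht1 : t ≤ 1) : ‖s • w + t • z‖ ≤ max s t + ε := by
  set γ := min s t with hγdef
  have hγ0 : 0 ≤ γ := le_min hs0 ht0
  have hγs : γ ≤ s := min_le_left _ _
  have hγt : γ ≤ t := min_le_right _ _
  have key : s • w + t • z = γ • (w + z) + ((s - γ) • w + (t - γ) • z) := by
    module
  have hb : ‖s • w + t • z‖ ≤ γ * ‖w + z‖ + ((s - γ) * ‖w‖ + (t - γ) * ‖z‖) := by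
    rw [key]
    refine (norm_add_le _ _).trans ?_
    gcongr
    · rw [norm_smul, Real.norm_eq_abs, abs_of_nonneg hγ0]
    · refine (norm_add_le _ _).trans ?_
      gcongr
      · rw [norm_smul, Real.norm_eq_abs, abs_of_nonneg (by linarith)]
      · rw [norm_smul, Real.norm_eq_abs, abs_of_nonneg (by linarith)]
  rw [hw, hz] at hb
  have hminmax : γ + max s t = s + t := min_add_max s t
  have hγ1 : γ ≤ 1 := le_trans hγs hs1
  nlinarith [hb, mul_le_mul_of_nonneg_left h2 hγ0]

lemma combo {w z : Y} (hw : ‖w‖ = 1) (hz : ‖z‖ = 1) {ε : ℝ} (hε : 0 ≤ ε)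
    (h1 : ‖w - z‖ ≤ 1 + ε) (h2 : ‖w + z‖ ≤ 1 + ε)
    {s t : ℝ} (hs0 : 0 ≤ s) (hs1 : s ≤ 1) (ht1 : |t| ≤ 1) :
    ‖s • w + t • z‖ ≤ max s |t| + ε := by
  rcases le_or_gt 0 t with h | h
  · rw [abs_of_nonneg h] at ht1 ⊢
    exact combo_nonneg hw hz hε h2 hs0 hs1 h ht1
  · rw [abs_of_neg h] at ht1 ⊢
    have hz' : ‖(-z : Y)‖ = 1 := by rwa [norm_neg]
    have h2' : ‖w + -z‖ ≤ 1 + ε := by rwa [← sub_eq_add_neg]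
    have : s • w + t • z = s • w + (-t) • (-z) := by module
    rw [this]
    exact combo_nonneg hw hz' hε h2' hs0 hs1 (by linarith) ht1

/-- The key step: given a finite-dimensional subspace `V`, ASQ provides a unit vector `z`
almost orthogonal (in the `ℓ∞` sense) to `V`. -/
lemma step_exists (hY : IsASQ Y) (V : Submodule ℝ Y) [FiniteDimensional ℝ V]
    {ε : ℝ} (hε : 0 < ε) :
    ∃ z : Y, ‖z‖ = 1 ∧ ∀ x ∈ V, ‖x‖ ≤ 1 → ∀ t : ℝ, |t| ≤ 1 → ‖x + t • z‖ ≤ 1 + ε := by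
  classical
  set K : Set Y := (V : Set Y) ∩ sphere (0 : Y) 1 with hKdef
  have hKcompact : IsCompact K := by
    have h1 : IsCompact (Subtype.val '' (sphere (0 : V) 1)) :=
      (isCompact_sphere (0 : V) 1).image continuous_subtype_val
    have h2 : K = Subtype.val '' (sphere (0 : V) 1) := by
      ext x
      constructor
      · rintro ⟨hxV, hxs⟩
        refine ⟨⟨x, hxV⟩, ?_, rfl⟩
        simp only [mem_sphere_iff_norm, sub_zero]
        simpa [mem_sphere_iff_norm] using hxs
      · rintro ⟨⟨x, hxV⟩, hxs, rfl⟩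
        refine ⟨hxV, ?_⟩
        simp only [mem_sphere_iff_norm, sub_zero] at hxs ⊢
        simpa using hxs
    rw [h2]; exact h1
  obtain ⟨net, hnetK, hnetfin, hnetcov⟩ :=
    totallyBounded_iff_subset.1 hKcompact.totallyBounded
      {p : Y × Y | dist p.1 p.2 < ε / 2} (dist_mem_uniformity (by linarith))
  set u : Set Y := net ∪ (fun y => -y) '' net with hudef
  have hufin : u.Finite := hnetfin.union (hnetfin.image _)
  have hunorm : ∀ w ∈ u, ‖w‖ = 1 := by
    rintro w (hw | ⟨y, hy, rfl⟩)
    · exact mem_sphere_zero_iff_norm.1 (hnetK hw).2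
    · rw [norm_neg]; exact mem_sphere_zero_iff_norm.1 (hnetK hy).2
  set F : Finset Y := hufin.toFinset with hFdef
  set yfun : Fin F.card → Y := fun i => (F.equivFin.symm i : Y) with hyfundef
  have hyfun_norm : ∀ i, ‖yfun i‖ = 1 := by
    intro i
    exact hunorm _ (hufin.mem_toFinset.1 (F.equivFin.symm i).2)
  obtain ⟨z, hz1, hz2⟩ := hY (ε / 2) (by linarith) F.card yfun hyfun_norm
  have hFz : ∀ w ∈ u, ‖w - z‖ ≤ 1 + ε / 2 := by
    intro w hw
    have hwF : w ∈ F := hufin.mem_toFinset.2 hw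
    have := hz2 (F.equivFin ⟨w, hwF⟩)
    simpa [hyfundef] using this
  refine ⟨z, hz1, ?_⟩
  intro x hxV hx t ht
  rcases eq_or_ne x 0 with rfl | hx0
  · rw [zero_add, norm_smul, hz1, Real.norm_eq_abs, mul_one]
    linarith
  · set s : ℝ := ‖x‖ with hsdef
    have hs0 : 0 < s := norm_pos_iff.2 hx0
    set xh : Y := s⁻¹ • x with hxhdef
    have hxh_norm : ‖xh‖ = 1 := norm_smul_inv_norm hx0
    have hxhK : xh ∈ K := by
      refine ⟨V.smul_mem _ hxV, ?_⟩
      simpa [mem_sphere_iff_norm] using hxh_norm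
    obtain ⟨w, hwnet, hww⟩ := Set.mem_iUnion₂.1 (hnetcov hxhK)
    have hdist : ‖xh - w‖ < ε / 2 := by
      simpa [dist_eq_norm] using hww
    have hw_unit : ‖w‖ = 1 := mem_sphere_zero_iff_norm.1 (hnetK hwnet).2
    have hwz1 : ‖w - z‖ ≤ 1 + ε / 2 := hFz w (Or.inl hwnet)
    have hwz2 : ‖w + z‖ ≤ 1 + ε / 2 := by
      have := hFz (-w) (Or.inr ⟨w, hwnet, rfl⟩)
      have e : (-w) - z = -(w + z) := by abel
      rwa [e, norm_neg] at this
    have hcombo : ‖s • w + t • z‖ ≤ max s |t| + ε / 2 :=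
      combo hw_unit hz1 (by linarith) hwz1 hwz2 (le_of_lt hs0) hx ht
    have hdec : x + t • z = (s • w + t • z) + s • (xh - w) := by
      have : s • xh = x := by
        rw [hxhdef, smul_smul, mul_inv_cancel₀ (ne_of_gt hs0), one_smul]
      rw [smul_sub, this]; abel
    calc ‖x + t • z‖ ≤ ‖s • w + t • z‖ + ‖s • (xh - w)‖ := by
          rw [hdec]; exact norm_add_le _ _
      _ ≤ (max s |t| + ε / 2) + s * (ε / 2) := by
          refine add_le_add hcombo ?_
          rw [norm_smul, Real.norm_eq_abs, abs_of_pos hs0]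
          exact mul_le_mul_of_nonneg_left (le_of_lt hdist) (le_of_lt hs0)
      _ ≤ 1 + ε := by
          have h1 : max s |t| ≤ 1 := max_le hx ht
          nlinarith

/-- The invariant maintained along the recursion. -/
def Good (n : ℕ) (v : Fin n → Y) : Prop :=
  (∀ i, ‖v i‖ = 1) ∧ ∀ a : Fin n → ℝ, (∀ i, |a i| ≤ 1) →
    ‖∑ i, a i • v i‖ ≤ 3 / 2 - (1 / 2 : ℝ) ^ n

lemma good_extend {n : ℕ} {v : Fin n → Y} (hv : Good n v) {z : Y} (hz : ‖z‖ = 1)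
    (hstep : ∀ x ∈ Submodule.span ℝ (Set.range v), ‖x‖ ≤ 1 → ∀ t : ℝ, |t| ≤ 1 →
      ‖x + t • z‖ ≤ 1 + (1 / 2 : ℝ) ^ (n + 2)) : Good (n + 1) (Fin.snoc v z) := by
  constructor
  · intro i
    refine Fin.lastCases ?_ ?_ i
    · rw [Fin.snoc_last]; exact hz
    · intro j; rw [Fin.snoc_castSucc]; exact hv.1 j
  · intro a ha
    rw [Fin.sum_univ_castSucc]
    simp only [Fin.snoc_castSucc, Fin.snoc_last]
    set x : Y := ∑ i : Fin n, a i.castSucc • v i with hxdef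
    have hx : ‖x‖ ≤ 3 / 2 - (1 / 2 : ℝ) ^ n := hv.2 _ (fun i => ha _)
    have hxV : x ∈ Submodule.span ℝ (Set.range v) :=
      Submodule.sum_mem _ fun i _ =>
        Submodule.smul_mem _ _ (Submodule.subset_span ⟨i, rfl⟩)
    rcases Nat.eq_zero_or_pos n with rfl | hn
    · have hx0 : x = 0 := by simp [hxdef]
      rw [hx0, zero_add, norm_smul, hz, Real.norm_eq_abs, mul_one]
      have h := ha (Fin.last 0)
      norm_num at h ⊢
      linarith
    · set B : ℝ := 3 / 2 - (1 / 2 : ℝ) ^ n with hBdef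
      have hpow : (1 / 2 : ℝ) ^ n ≤ (1 / 2 : ℝ) ^ 1 :=
        pow_le_pow_of_le_one (by norm_num) (by norm_num) hn
      have hB1 : 1 ≤ B := by rw [hBdef]; norm_num at hpow ⊢; linarith
      have hB0 : 0 < B := by linarith
      have hxB : ‖B⁻¹ • x‖ ≤ 1 := by
        rw [norm_smul, Real.norm_eq_abs, abs_of_pos (inv_pos.2 hB0)]
        rw [inv_mul_le_iff₀ hB0, mul_one]
        exact hx
      have htB : |B⁻¹ * a (Fin.last n)| ≤ 1 := by
        rw [abs_mul, abs_of_pos (inv_pos.2 hB0)]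
        calc B⁻¹ * |a (Fin.last n)| ≤ B⁻¹ * 1 :=
              mul_le_mul_of_nonneg_left (ha _) (le_of_lt (inv_pos.2 hB0))
          _ ≤ 1 := by rw [mul_one]; exact inv_le_one_of_one_le₀ hB1
      have hkey := hstep (B⁻¹ • x) (Submodule.smul_mem _ _ hxV) hxB
        (B⁻¹ * a (Fin.last n)) htB
      have hrw : x + a (Fin.last n) • z = B • (B⁻¹ • x + (B⁻¹ * a (Fin.last n)) • z) := by
        rw [smul_add, smul_smul, smul_smul, mul_inv_cancel₀ (ne_of_gt hB0), one_smul,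
          ← mul_assoc, mul_inv_cancel₀ (ne_of_gt hB0), one_mul]
      rw [hrw, norm_smul, Real.norm_eq_abs, abs_of_pos hB0]
      have hBle : B ≤ 3 / 2 := by
        rw [hBdef]
        have : 0 < (1 / 2 : ℝ) ^ n := by positivity
        linarith
      have hp1 : (1 / 2 : ℝ) ^ (n + 2) = (1 / 2) * (1 / 2) * (1 / 2 : ℝ) ^ n := by ring
      have hp0 : 0 < (1 / 2 : ℝ) ^ n := by positivity
      have h2 : B * (1 + (1 / 2 : ℝ) ^ (n + 2)) ≤ 3 / 2 - (1 / 2 : ℝ) ^ (n + 1) := by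
        have hp2 : (1 / 2 : ℝ) ^ (n + 1) = (1 / 2) * (1 / 2 : ℝ) ^ n := by ring
        rw [hp1, hp2]
        nlinarith
      calc B * ‖B⁻¹ • x + (B⁻¹ * a (Fin.last n)) • z‖
          ≤ B * (1 + (1 / 2 : ℝ) ^ (n + 2)) :=
            mul_le_mul_of_nonneg_left hkey (le_of_lt hB0)
        _ ≤ 3 / 2 - (1 / 2 : ℝ) ^ (n + 1) := h2

noncomputable def seqAux (hY : IsASQ Y) : ∀ n : ℕ, { v : Fin n → Y // Good n v }
  | 0 => ⟨fun i => i.elim0, fun i => i.elim0, fun a _ => by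
      simp only [Finset.univ_eq_empty, Finset.sum_empty, norm_zero, pow_zero]
      norm_num⟩
  | n + 1 =>
    let p := seqAux hY n
    have : FiniteDimensional ℝ (Submodule.span ℝ (Set.range p.1)) :=
      FiniteDimensional.span_of_finite ℝ (Set.finite_range p.1)
    let h := step_exists hY (Submodule.span ℝ (Set.range p.1))
      (ε := (1 / 2 : ℝ) ^ (n + 2)) (by positivity)
    ⟨Fin.snoc p.1 h.choose, good_extend p.2 h.choose_spec.1 h.choose_spec.2⟩

noncomputable def zseq (hY : IsASQ Y) (n : ℕ) : Y :=
  (seqAux hY (n + 1)).1 (Fin.last n)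

lemma seqAux_coh (hY : IsASQ Y) : ∀ n (i : Fin n), (seqAux hY n).1 i = zseq hY i := by
  intro n
  induction n with
  | zero => exact fun i => i.elim0
  | succ n ih =>
    intro i
    refine Fin.lastCases ?_ ?_ i
    · rfl
    · intro j
      have h1 : (seqAux hY (n + 1)).1 j.castSucc = (seqAux hY n).1 j := by
        show (Fin.snoc (seqAux hY n).1 _ : Fin (n+1) → Y) j.castSucc = _
        rw [Fin.snoc_castSucc]
      rw [h1, ih j, Fin.coe_castSucc]

lemma zseq_norm (hY : IsASQ Y) (n : ℕ) : ‖zseq hY n‖ = 1 :=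
  (seqAux hY (n + 1)).2.1 (Fin.last n)

lemma zseq_bound (hY : IsASQ Y) (n : ℕ) (a : Fin n → ℝ) (ha : ∀ i, |a i| ≤ 1) :
    ‖∑ i, a i • zseq hY i‖ ≤ 3 / 2 := by
  have h1 : ∑ i, a i • zseq hY (i : ℕ) = ∑ i, a i • (seqAux hY n).1 i :=
    Finset.sum_congr rfl fun i _ => by rw [seqAux_coh]
  rw [h1]
  have h2 := (seqAux hY n).2.2 a ha
  have h3 : 0 < (1 / 2 : ℝ) ^ n := by positivity
  linarith

lemma zseq_finset_bound (hY : IsASQ Y) (s : Finset ℕ) (a : ℕ → ℝ) {M : ℝ} (hM : 0 ≤ M)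
    (ha : ∀ i ∈ s, |a i| ≤ M) : ‖∑ i ∈ s, a i • zseq hY i‖ ≤ 3 / 2 * M := by
  classical
  obtain ⟨n, hn⟩ := s.exists_nat_subset_range
  set b : ℕ → ℝ := fun i => if i ∈ s then a i else 0 with hbdef
  have hsum : ∑ i ∈ s, a i • zseq hY i = ∑ i ∈ Finset.range n, b i • zseq hY i := by
    rw [← Finset.sum_subset hn (fun x _ hx => by simp [hbdef, hx])]
    exact Finset.sum_congr rfl fun i hi => by simp [hbdef, hi]
  rcases eq_or_lt_of_le hM with rfl | hM0
  · have : ∀ i ∈ s, a i = 0 := fun i hi => abs_nonpos_iff.1 (ha i hi)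
    rw [Finset.sum_congr rfl fun i hi => by rw [this i hi, zero_smul]]
    simp
  · have hb1 : ∀ i : Fin n, |b i / M| ≤ 1 := by
      intro i
      rw [abs_div, abs_of_pos hM0, div_le_one hM0]
      by_cases h : (i : ℕ) ∈ s
      · simpa [hbdef, h] using ha i h
      · simp [hbdef, h]; linarith
    have hkey := zseq_bound hY n (fun i : Fin n => b i / M) hb1
    have heq : ∑ i ∈ Finset.range n, b i • zseq hY i
        = M • ∑ i : Fin n, (b (i : ℕ) / M) • zseq hY (i : ℕ) := by
      rw [Finset.smul_sum, ← Fin.sum_univ_eq_sum_range (fun i => b i • zseq hY i) n]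
      refine Finset.sum_congr rfl fun i _ => ?_
      rw [smul_smul, mul_div_cancel₀ _ (ne_of_gt hM0)]
    rw [hsum, heq, norm_smul, Real.norm_eq_abs, abs_of_pos hM0, mul_comm]
    exact mul_le_mul_of_nonneg_right hkey (le_of_lt hM0)

lemma zseq_lower (hY : IsASQ Y) (n m : ℕ) (hm : m < n) (a : ℕ → ℝ)
    (ha : ∀ i, |a i| ≤ |a m|) :
    1 / 2 * |a m| ≤ ‖∑ i ∈ Finset.range n, a i • zseq hY i‖ := by
  classical
  set b : ℕ → ℝ := fun i => if i = m then -a i else a i with hbdef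
  have hb : ∀ i, |b i| ≤ |a m| := by
    intro i
    by_cases h : i = m <;> simp [hbdef, h, abs_neg, ha i]
  have hbb : ‖∑ i ∈ Finset.range n, b i • zseq hY i‖ ≤ 3 / 2 * |a m| :=
    zseq_finset_bound hY _ b (abs_nonneg _) fun i _ => hb i
  have hdiff : ∑ i ∈ Finset.range n, a i • zseq hY i
      - ∑ i ∈ Finset.range n, b i • zseq hY i = (2 * a m) • zseq hY m := by
    rw [← Finset.sum_sub_distrib]
    rw [Finset.sum_eq_single m]
    · have hbm : b m = -a m := by simp [hbdef]
      rw [hbm, ← sub_smul]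
      congr 1
      ring
    · intro i _ hi
      simp [hbdef, hi]
    · intro h
      exact absurd (Finset.mem_range.2 hm) h
  have h2 : ‖(2 * a m) • zseq hY m‖ = 2 * |a m| := by
    rw [norm_smul, zseq_norm, mul_one, Real.norm_eq_abs, abs_mul, abs_two]
  have h3 := norm_sub_le (∑ i ∈ Finset.range n, a i • zseq hY i)
    (∑ i ∈ Finset.range n, b i • zseq hY i)
  rw [hdiff, h2] at h3
  linarith

end ASQProof

open ASQProof in
theorem asq_contains_c0
    (Y : Type*) [NormedAddCommGroup Y] [NormedSpace ℝ Y] [CompleteSpace Y]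
    (hY : IsASQ Y) :
    ∃ X : Subspace ℝ Y, IsClosed (X : Set Y) ∧
      Nonempty (X ≃L[ℝ] ZeroAtInftyContinuousMap ℕ ℝ) := by
  classical
  set z : ℕ → Y := zseq hY with hzdef
  -- tail smallness of c₀ functions
  have htail : ∀ (f : ZeroAtInftyContinuousMap ℕ ℝ) (ε : ℝ), 0 < ε →
      ∃ N : ℕ, ∀ i ≥ N, |f i| < ε := by
    intro f ε hε
    have h0 : Filter.Tendsto f (Filter.cocompact ℕ) (nhds 0) :=
      ZeroAtInftyContinuousMapClass.zero_at_infty f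
    rw [cocompact_eq_atTop] at h0
    obtain ⟨N, hN⟩ := Metric.tendsto_atTop.1 h0 ε hε
    exact ⟨N, fun i hi => by simpa [Real.dist_eq] using hN i hi⟩
  have hpt : ∀ (f : ZeroAtInftyContinuousMap ℕ ℝ) (i : ℕ), |f i| ≤ ‖f‖ := by
    intro f i
    have := BoundedContinuousFunction.norm_coe_le_norm f.toBCF i
    simpa [ZeroAtInftyContinuousMap.norm_toBCF_eq_norm] using this
  have hnle : ∀ (f : ZeroAtInftyContinuousMap ℕ ℝ) (C : ℝ), 0 ≤ C →
      (∀ i, |f i| ≤ C) → ‖f‖ ≤ C := by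
    intro f C hC h
    rw [← ZeroAtInftyContinuousMap.norm_toBCF_eq_norm]
    exact (BoundedContinuousFunction.norm_le hC).2 fun i => by simpa using h i
  -- summability
  have hsummable : ∀ f : ZeroAtInftyContinuousMap ℕ ℝ, Summable fun i => f i • z i := by
    intro f
    rw [summable_iff_vanishing_norm]
    intro ε hε
    obtain ⟨N, hN⟩ := htail f (ε / 2) (by linarith)
    refine ⟨Finset.range N, fun t ht => ?_⟩
    have hb : ∀ i ∈ t, |f i| ≤ ε / 2 := by
      intro i hi
      have hnotin := Finset.disjoint_left.1 ht hi
      have : N ≤ i := by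
        by_contra h
        exact hnotin (Finset.mem_range.2 (not_le.1 h))
      exact le_of_lt (hN i this)
    have := zseq_finset_bound hY t (fun i => f i) (by linarith) hb
    calc ‖∑ i ∈ t, f i • z i‖ ≤ 3 / 2 * (ε / 2) := this
      _ < ε := by linarith
  -- the linear map
  set Tfun : ZeroAtInftyContinuousMap ℕ ℝ → Y := fun f => ∑' i, f i • z i with hTdef
  have hT_partial : ∀ f : ZeroAtInftyContinuousMap ℕ ℝ,
      Filter.Tendsto (fun n => ∑ i ∈ Finset.range n, f i • z i) Filter.atTop
        (nhds (Tfun f)) := fun f => (hsummable f).hasSum.tendsto_sum_nat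
  have hTbound : ∀ f : ZeroAtInftyContinuousMap ℕ ℝ, ‖Tfun f‖ ≤ 3 / 2 * ‖f‖ := by
    intro f
    refine le_of_tendsto (hT_partial f).norm (Filter.Eventually.of_forall fun n => ?_)
    exact zseq_finset_bound hY _ (fun i => f i) (norm_nonneg f) fun i _ => hpt f i
  have hTlower : ∀ f : ZeroAtInftyContinuousMap ℕ ℝ, 1 / 2 * ‖f‖ ≤ ‖Tfun f‖ := by
    intro f
    rcases eq_or_ne f 0 with rfl | hf
    · simp [hTdef]
    · obtain ⟨i₀, hi₀⟩ : ∃ i, f i ≠ 0 := by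
        by_contra h
        push_neg at h
        exact hf (DFunLike.ext _ _ fun i => h i)
      obtain ⟨N, hN⟩ := htail f |f i₀| (abs_pos.2 hi₀)
      have hne : (Finset.range (max N i₀ + 1)).Nonempty :=
        ⟨i₀, Finset.mem_range.2 (by omega)⟩
      obtain ⟨m, hmmem, hm⟩ :=
        Finset.exists_max_image (Finset.range (max N i₀ + 1)) (fun i => |f i|) hne
      have hmax : ∀ i, |f i| ≤ |f m| := by
        intro i
        by_cases h : i ∈ Finset.range (max N i₀ + 1)
        · exact hm i h
        · have hNi : N ≤ i := by
            rw [Finset.mem_range] at h; omega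
          have h1 : |f i| < |f i₀| := hN i hNi
          have h2 : |f i₀| ≤ |f m| := hm i₀ (Finset.mem_range.2 (by omega))
          linarith
      have hnorm : ‖f‖ = |f m| :=
        le_antisymm (hnle f _ (abs_nonneg _) hmax) (hpt f m)
      have hmlt : m < max N i₀ + 1 := Finset.mem_range.1 hmmem
      refine ge_of_tendsto (hT_partial f).norm ?_
      rw [Filter.eventually_atTop]
      refine ⟨m + 1, fun n hn => ?_⟩
      rw [hnorm]
      exact zseq_lower hY n m (by omega) (fun i => f i) hmax
  set Tlin : ZeroAtInftyContinuousMap ℕ ℝ →ₗ[ℝ] Y :=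
    { toFun := Tfun
      map_add' := by
        intro f g
        have : ∀ i : ℕ, (f + g) i • z i = f i • z i + g i • z i := by
          intro i
          rw [ZeroAtInftyContinuousMap.coe_add, Pi.add_apply, add_smul]
        simp only [hTdef]
        rw [tsum_congr this, Summable.tsum_add (hsummable f) (hsummable g)]
      map_smul' := by
        intro c f
        have : ∀ i : ℕ, (c • f) i • z i = c • (f i • z i) := by
          intro i
          rw [ZeroAtInftyContinuousMap.coe_smul, Pi.smul_apply, smul_assoc]
        simp only [hTdef, RingHom.id_apply]
        rw [tsum_congr this, Summable.tsum_const_smul c (hsummable f)] } with hTlindef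
  set T : ZeroAtInftyContinuousMap ℕ ℝ →L[ℝ] Y :=
    Tlin.mkContinuous (3 / 2) hTbound with hTc
  have hTapp : ∀ f, T f = Tfun f := fun f => rfl
  have hanti : AntilipschitzWith 2 T := by
    refine T.antilipschitz_of_bound fun f => ?_
    have := hTlower f
    rw [hTapp]
    push_cast
    linarith
  have hinj : Function.Injective T := hanti.injective
  have hclosed_range : IsClosed (Set.range T) :=
    hanti.isClosed_range T.uniformContinuous
  refine ⟨LinearMap.range (T : ZeroAtInftyContinuousMap ℕ ℝ →ₗ[ℝ] Y), ?_, ?_⟩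
  · have : (LinearMap.range (T : ZeroAtInftyContinuousMap ℕ ℝ →ₗ[ℝ] Y) : Set Y) = Set.range T := by
      ext y; simp [LinearMap.mem_range]
    rw [this]
    exact hclosed_range
  · haveI : CompleteSpace (LinearMap.range (T : ZeroAtInftyContinuousMap ℕ ℝ →ₗ[ℝ] Y)) := by
      have h : (LinearMap.range (T : ZeroAtInftyContinuousMap ℕ ℝ →ₗ[ℝ] Y) : Set Y) = Set.range T := by
        ext y; simp [LinearMap.mem_range]
      have : IsClosed (LinearMap.range (T : ZeroAtInftyContinuousMap ℕ ℝ →ₗ[ℝ] Y) : Set Y) := by rw [h]; exact hclosed_range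
      exact this.completeSpace_coe
    set Tcod : ZeroAtInftyContinuousMap ℕ ℝ →L[ℝ] (LinearMap.range (T : ZeroAtInftyContinuousMap ℕ ℝ →ₗ[ℝ] Y)) :=
      T.codRestrict (LinearMap.range (T : ZeroAtInftyContinuousMap ℕ ℝ →ₗ[ℝ] Y)) (fun f => LinearMap.mem_range_self _ f) with hTcod
    have hinjc : Function.Injective Tcod := by
      intro f g hfg
      exact hinj (by simpa [hTcod] using congrArg Subtype.val hfg)
    have hsurjc : Function.Surjective Tcod := by
      rintro ⟨y, hy⟩
      obtain ⟨f, hf⟩ := LinearMap.mem_range.1 hy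
      exact ⟨f, Subtype.ext (by simpa [hTcod] using hf)⟩
    have hker : LinearMap.ker (Tcod : ZeroAtInftyContinuousMap ℕ ℝ →ₗ[ℝ] _) = ⊥ := LinearMap.ker_eq_bot.2 (by exact hinjc)
    have hrange : LinearMap.range (Tcod : ZeroAtInftyContinuousMap ℕ ℝ →ₗ[ℝ] _) = ⊤ := LinearMap.range_eq_top.2 (by exact hsurjc)
    exact ⟨(ContinuousLinearEquiv.ofBijective Tcod hker hrange).symm⟩
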